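/- For every real s, every real t, and every integer n ≥ 1: S_n(1, s+1; t) = S_n(1,1;t) + s·S_{n-1}(2,1;t) = ∑_{k=0}^{n} C(2n−k, k)·t^k + s·∑_{k=0}^{n-1} C(2n−1−k, k)·t^k. Moreover, at t = -1/4 one has S_n(1, s+1; -1/4) = (4ns + 2n + 1)/4^n. -/

import Mathlib

/-- The sequence `Sₙ(a,b;t)`: `S₀ = 1`, `S₁ = a·t + b`,
`Sₙ = (1+2t)·Sₙ₋₁ − t²·Sₙ₋₂`. -/
def S (a b t : ℝ) : ℕ → ℝ
  | 0 => 1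
  | 1 => a * t + b
  | n + 2 => (1 + 2 * t) * S a b t (n + 1) - t ^ 2 * S a b t n

/-- Fibonacci-polynomial-like sum. -/
noncomputable def g (t : ℝ) (m : ℕ) : ℝ :=
  ∑ k ∈ Finset.range (m + 1), (Nat.choose (m - k) k : ℝ) * t ^ k

lemma g_rec (t : ℝ) (m : ℕ) : g t (m + 2) = g t (m + 1) + t * g t m := by
  unfold g
  rw [Finset.sum_range_succ' (fun k => (Nat.choose (m + 2 - k) k : ℝ) * t ^ k) (m + 2),
      Finset.sum_range_succ' (fun k => (Nat.choose (m + 1 - k) k : ℝ) * t ^ k) (m + 1)]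
  simp only [Nat.choose_zero_right, Nat.cast_one, pow_zero, mul_one]
  have key : ∀ j ∈ Finset.range (m + 2),
      ((Nat.choose (m + 2 - (j + 1)) (j + 1) : ℝ)) * t ^ (j + 1)
      = (Nat.choose (m + 1 - (j + 1)) (j + 1) : ℝ) * t ^ (j + 1)
        + t * ((Nat.choose (m - j) j : ℝ) * t ^ j) := by
    intro j hj
    rcases Nat.lt_or_ge j (m + 1) with h | h
    · have e1 : m + 2 - (j + 1) = (m - j) + 1 := by omega
      have e2 : m + 1 - (j + 1) = m - j := by omega
      rw [e1, e2, Nat.choose_succ_succ (m - j) j]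
      push_cast; ring
    · have hj2 : j = m + 1 := by
        simp only [Finset.mem_range] at hj; omega
      subst hj2
      have e1 : m + 2 - (m + 1 + 1) = 0 := by omega
      have e2 : m + 1 - (m + 1 + 1) = 0 := by omega
      have e3 : m - (m + 1) = 0 := by omega
      rw [e1, e2, e3, Nat.choose_eq_zero_of_lt (by omega), Nat.choose_eq_zero_of_lt (by omega)]
      simp
  rw [Finset.sum_congr rfl key, Finset.sum_add_distrib]
  rw [Finset.sum_range_succ (fun j => (Nat.choose (m + 1 - (j + 1)) (j + 1) : ℝ) * t ^ (j + 1)) (m + 1)]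
  have ez : (Nat.choose (m + 1 - (m + 1 + 1)) (m + 1 + 1) : ℝ) * t ^ (m + 1 + 1) = 0 := by
    have : m + 1 - (m + 1 + 1) = 0 := by omega
    rw [this, Nat.choose_eq_zero_of_lt (by omega)]; simp
  rw [ez, add_zero]
  rw [Finset.sum_range_succ (fun j => t * ((Nat.choose (m - j) j : ℝ) * t ^ j)) (m + 1)]
  have ez2 : t * ((Nat.choose (m - (m + 1)) (m + 1) : ℝ) * t ^ (m + 1)) = 0 := by
    have : m - (m + 1) = 0 := by omega
    rw [this, Nat.choose_eq_zero_of_lt (by omega)]; simp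
  rw [ez2, add_zero, Finset.mul_sum]
  ring

lemma g_rec4 (t : ℝ) (m : ℕ) :
    g t (m + 4) = (1 + 2 * t) * g t (m + 2) - t ^ 2 * g t m := by
  have h4 := g_rec t (m + 2)
  have h3 := g_rec t (m + 1)
  have h2 := g_rec t m
  have e : g t (m + 2 + 2) = g t (m + 4) := by norm_num
  have e3 : g t (m + 2 + 1) = g t (m + 3) := by norm_num
  rw [e, e3] at h4
  have e2 : g t (m + 1 + 2) = g t (m + 3) := by norm_num
  have e4 : g t (m + 1 + 1) = g t (m + 2) := by norm_num
  rw [e2, e4] at h3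
  rw [h4, h3, h2]; ring

lemma S11_g (t : ℝ) : ∀ n, S 1 1 t n = g t (2 * n) ∧ S 1 1 t (n + 1) = g t (2 * n + 2) := by
  intro n
  induction n with
  | zero =>
    constructor
    · show (1 : ℝ) = g t 0
      simp [g]
    · show 1 * t + 1 = g t 2
      simp [g, Finset.sum_range_succ]
      ring
  | succ k ih =>
    obtain ⟨h1, h2⟩ := ih
    refine ⟨h2, ?_⟩
    show (1 + 2 * t) * S 1 1 t (k + 1) - t ^ 2 * S 1 1 t k = g t (2 * (k + 1) + 2)
    have : 2 * (k + 1) + 2 = 2 * k + 4 := by ring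
    rw [this, g_rec4, h1, h2]

lemma S21_g (t : ℝ) : ∀ n, S 2 1 t n = g t (2 * n + 1) ∧ S 2 1 t (n + 1) = g t (2 * n + 3) := by
  intro n
  induction n with
  | zero =>
    constructor
    · show (1 : ℝ) = g t 1
      simp [g, Finset.sum_range_succ]
    · show 2 * t + 1 = g t 3
      simp [g, Finset.sum_range_succ]
      ring
  | succ k ih =>
    obtain ⟨h1, h2⟩ := ih
    refine ⟨h2, ?_⟩
    show (1 + 2 * t) * S 2 1 t (k + 1) - t ^ 2 * S 2 1 t k = g t (2 * (k + 1) + 3)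
    have : 2 * (k + 1) + 3 = (2 * k + 1) + 4 := by ring
    rw [this, g_rec4, h1, h2]

lemma S_split (s t : ℝ) : ∀ n, S 1 (s + 1) t (n + 1) = S 1 1 t (n + 1) + s * S 2 1 t n ∧
    S 1 (s + 1) t (n + 2) = S 1 1 t (n + 2) + s * S 2 1 t (n + 1) := by
  intro n
  induction n with
  | zero =>
    constructor
    · show 1 * t + (s + 1) = 1 * t + 1 + s * 1
      ring
    · show (1 + 2 * t) * (1 * t + (s + 1)) - t ^ 2 * 1 =
        ((1 + 2 * t) * (1 * t + 1) - t ^ 2 * 1) + s * (2 * t + 1)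
      ring
  | succ k ih =>
    obtain ⟨h1, h2⟩ := ih
    refine ⟨h2, ?_⟩
    show (1 + 2 * t) * S 1 (s + 1) t (k + 2) - t ^ 2 * S 1 (s + 1) t (k + 1) =
      ((1 + 2 * t) * S 1 1 t (k + 2) - t ^ 2 * S 1 1 t (k + 1)) +
        s * ((1 + 2 * t) * S 2 1 t (k + 1) - t ^ 2 * S 2 1 t k)
    rw [h1, h2]; ring

lemma S_closed (s : ℝ) : ∀ n : ℕ,
    S 1 (s + 1) (-1 / 4) n = (4 * n * s + 2 * n + 1) / 4 ^ n ∧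
    S 1 (s + 1) (-1 / 4) (n + 1) = (4 * (n + 1) * s + 2 * (n + 1) + 1) / 4 ^ (n + 1) := by
  intro n
  induction n with
  | zero =>
    constructor
    · show (1 : ℝ) = (4 * (0 : ℕ) * s + 2 * (0 : ℕ) + 1) / 4 ^ (0 : ℕ)
      norm_num
    · show 1 * (-1 / 4) + (s + 1) = (4 * ((0 : ℕ) + 1) * s + 2 * ((0 : ℕ) + 1) + 1) / 4 ^ ((0 : ℕ) + 1)
      push_cast; ring
  | succ k ih =>
    obtain ⟨h1, h2⟩ := ih
    refine ⟨by push_cast; exact h2, ?_⟩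
    show (1 + 2 * (-1 / 4)) * S 1 (s + 1) (-1 / 4) (k + 1) -
        (-1 / 4) ^ 2 * S 1 (s + 1) (-1 / 4) k = _
    rw [h1, h2]
    push_cast
    have h4 : (4 : ℝ) ^ (k + 1 + 1) = 4 ^ k * 16 := by ring
    have h4' : (4 : ℝ) ^ (k + 1) = 4 ^ k * 4 := by ring
    rw [h4, h4']
    field_simp
    ring

lemma g_even_sum (t : ℝ) (n : ℕ) :
    g t (2 * n) = ∑ k ∈ Finset.range (n + 1), (Nat.choose (2 * n - k) k : ℝ) * t ^ k := by
  unfold g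
  symm
  apply Finset.sum_subset
  · intro x hx; simp only [Finset.mem_range] at *; omega
  · intro x hx hx'
    simp only [Finset.mem_range] at *
    rw [Nat.choose_eq_zero_of_lt (by omega)]
    simp

lemma g_odd_sum (t : ℝ) (n : ℕ) :
    g t (2 * n + 1) = ∑ k ∈ Finset.range (n + 1), (Nat.choose (2 * n + 1 - k) k : ℝ) * t ^ k := by
  unfold g
  symm
  apply Finset.sum_subset
  · intro x hx; simp only [Finset.mem_range] at *; omega
  · intro x hx hx'
    simp only [Finset.mem_range] at *
    rw [Nat.choose_eq_zero_of_lt (by omega)]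
    simp

/-- For `n ≥ 1`:
`Sₙ(1,s+1;t) = Sₙ(1,1;t) + s·Sₙ₋₁(2,1;t)
 = ∑_{k=0}^{n} C(2n−k,k) tᵏ + s·∑_{k=0}^{n-1} C(2n−1−k,k) tᵏ`,
and `Sₙ(1,s+1;−1/4) = (4ns + 2n + 1)/4ⁿ`. -/
theorem S_one_s_plus_one (s t : ℝ) (n : ℕ) (hn : 1 ≤ n) :
    S 1 (s + 1) t n = S 1 1 t n + s * S 2 1 t (n - 1) ∧
    S 1 (s + 1) t n =
      (∑ k ∈ Finset.range (n + 1), (Nat.choose (2 * n - k) k : ℝ) * t ^ k)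
        + s * ∑ k ∈ Finset.range n, (Nat.choose (2 * n - 1 - k) k : ℝ) * t ^ k ∧
    S 1 (s + 1) (-1 / 4) n = (4 * n * s + 2 * n + 1) / 4 ^ n := by
  obtain ⟨m, rfl⟩ : ∃ m, n = m + 1 := ⟨n - 1, by omega⟩
  have hA := (S_split s t m).1
  have hC := (S_closed s m).2
  push_cast at hC ⊢
  refine ⟨by simpa using hA, ?_, hC⟩
  rw [hA, (S11_g t (m + 1)).1, (S21_g t m).1, g_even_sum, g_odd_sum]
  have e1 : 2 * m + 1 = 2 * (m + 1) - 1 := by omega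
  rw [e1]
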